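/- Let q = p^m with p prime and m > 1, let n be a divisor of q − 1, and let k ≤ ⌊(n−1)/2⌋. Then for every k' with 1 ≤ k' ≤ k there exists an MDS LCD [n−k, k'] code over F_q, i.e., a k'-dimensional LCD subspace of F_q^{n−k} with minimum distance (n−k) − k' + 1. -/

import Mathlib

/-- The Euclidean dual of a code `C ⊆ R^n`:
`C^⊥ = {x : x · c = 0 for all c ∈ C}` where `x · y = ∑ i, x i * y i`. -/
def dualCode {R : Type*} [CommRing R] {n : ℕ} (C : Submodule R (Fin n → R)) :
    Submodule R (Fin n → R) where
  carrier := {x | ∀ c ∈ C, ∑ i, x i * c i = 0}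
  zero_mem' := by intro c hc; simp
  add_mem' := by
    intro a b ha hb c hc
    have h1 := ha c hc
    have h2 := hb c hc
    simp only [Pi.add_apply, add_mul, Finset.sum_add_distrib, h1, h2, add_zero]
  smul_mem' := by
    intro r x hx c hc
    have h1 := hx c hc
    simp only [Pi.smul_apply, smul_eq_mul, mul_assoc, ← Finset.mul_sum, h1, mul_zero]

/-- A code is LCD (linear complementary dual) if `C ∩ C^⊥ = {0}`. -/
def IsLCD {R : Type*} [CommRing R] {n : ℕ} (C : Submodule R (Fin n → R)) : Prop :=
  C ⊓ dualCode C = ⊥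

open Classical in
/-- The Hamming weight of a vector: the number of nonzero coordinates. -/
noncomputable def wt {R : Type*} [Zero R] {n : ℕ} (x : Fin n → R) : ℕ :=
  (Finset.univ.filter fun i => x i ≠ 0).card

/-- `C` has minimum distance `d`: some nonzero codeword has weight `d`
and every nonzero codeword has weight at least `d`. -/
def hasMinDist {F : Type*} [Field F] {n : ℕ} (C : Submodule F (Fin n → F)) (d : ℕ) : Prop :=
  (∃ c ∈ C, c ≠ 0 ∧ wt c = d) ∧ ∀ c ∈ C, c ≠ 0 → d ≤ wt c

section Aux

variable {F : Type*} [Field F] {N K : ℕ}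

/-- Scaled evaluation map. -/
noncomputable def evalMapL (sc a : Fin N → F) : Polynomial F →ₗ[F] (Fin N → F) where
  toFun f := fun i => sc i * f.eval (a i)
  map_add' f g := by funext i; simp [mul_add]
  map_smul' r f := by funext i; simp; ring

/-- Scaled evaluation map restricted to polynomials of degree `< K`. -/
noncomputable def evalCodeMap (K : ℕ) (sc a : Fin N → F) :
    Polynomial.degreeLT F K →ₗ[F] (Fin N → F) :=
  (evalMapL sc a).comp (Polynomial.degreeLT F K).subtype

@[simp] lemma evalCodeMap_apply (K : ℕ) (sc a : Fin N → F) (f : Polynomial.degreeLT F K)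
    (i : Fin N) : evalCodeMap K sc a f i = sc i * (f : Polynomial F).eval (a i) := rfl

lemma exists_sq_eval_ne [Fintype F] (P : Polynomial F) (hP : P ≠ 0)
    (hdeg : P.natDegree ≤ K) (hcard : 2 * K + 2 ≤ Fintype.card F) :
    ∃ lam : F, lam ≠ 0 ∧ P.eval (lam * lam) ≠ 0 := by
  classical
  set s : Finset F := Finset.univ.erase 0 with hs
  set S : Finset F := s.image (fun x => x * x) with hS
  have hscard : s.card = Fintype.card F - 1 := by
    rw [hs, Finset.card_erase_of_mem (Finset.mem_univ _), Finset.card_univ]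
  have h1 : s.card ≤ 2 * S.card := by
    refine Finset.card_le_mul_card_image s 2 ?_
    intro y hy
    rcases Finset.eq_empty_or_nonempty (s.filter fun x => x * x = y) with he | ⟨x, hx⟩
    · simp [he]
    · have hsub : (s.filter fun z => z * z = y) ⊆ {x, -x} := by
        intro z hz
        have hzz := (Finset.mem_filter.mp hz).2
        have hxx := (Finset.mem_filter.mp hx).2
        have : z * z = x * x := by rw [hzz, hxx]
        rcases mul_self_eq_mul_self_iff.mp this with h | h <;> simp [h]
      calc (s.filter fun z => z * z = y).card ≤ ({x, -x} : Finset F).card :=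
            Finset.card_le_card hsub
        _ ≤ 2 := by
            refine (Finset.card_insert_le _ _).trans ?_
            simp
  have h2 : P.roots.toFinset.card < S.card := by
    have hr : P.roots.toFinset.card ≤ K := by
      calc P.roots.toFinset.card ≤ Multiset.card P.roots := Multiset.toFinset_card_le _
        _ ≤ P.natDegree := Polynomial.card_roots' P
        _ ≤ K := hdeg
    omega
  have hnotsub : ¬ S ⊆ P.roots.toFinset := fun h =>
    absurd (Finset.card_le_card h) (not_le.mpr h2)
  obtain ⟨μ, hμS, hμR⟩ := Finset.not_subset.mp hnotsub
  obtain ⟨x, hxs, hxμ⟩ := Finset.mem_image.mp hμS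
  refine ⟨x, (Finset.mem_erase.mp hxs).1, ?_⟩
  rw [hxμ]
  intro h
  exact hμR (Multiset.mem_toFinset.mpr (Polynomial.mem_roots'.mpr ⟨hP, h⟩))

lemma filter_lt_eq_image (h : K ≤ N) :
    (Finset.univ.filter (fun i : Fin N => (i : ℕ) < K)) =
      Finset.univ.image (Fin.castLE h) := by
  ext i
  simp only [Finset.mem_filter, Finset.mem_univ, true_and, Finset.mem_image]
  constructor
  · intro hi
    exact ⟨⟨(i : ℕ), hi⟩, rfl⟩
  · rintro ⟨j, rfl⟩
    exact j.isLt

end Aux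

open Polynomial Finset Matrix in
theorem aux_code {F : Type*} [Field F] [Fintype F] {N K : ℕ} (hK : 1 ≤ K) (hKN : K < N)
    (hNq : N + 1 ≤ Fintype.card F) (hKq : 2 * K + 2 ≤ Fintype.card F) :
    ∃ C : Submodule F (Fin N → F),
      Module.finrank F C = K ∧ IsLCD C ∧ hasMinDist C (N - K + 1) := by
  classical
  obtain ⟨a⟩ : Nonempty (Fin N ↪ F) :=
    Function.Embedding.nonempty_of_card_le (by simp only [Fintype.card_fin]; omega)
  have hKle : K ≤ N := hKN.le
  set b : Fin K → F := fun j => a (Fin.castLE hKle j) with hb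
  have hbinj : Function.Injective b := fun i j h =>
    Fin.castLE_injective hKle (a.injective h)
  have hbInjOn : Set.InjOn b ↑(univ : Finset (Fin K)) := fun i _ j _ h => hbinj h
  set L : Fin K → F[X] := fun j => Lagrange.basis univ b j with hL
  have hLmem : ∀ j, L j ∈ degreeLT F K := by
    intro j
    rw [Polynomial.mem_degreeLT, hL]
    rw [Lagrange.degree_basis hbInjOn (mem_univ j)]
    simp only [card_univ, Fintype.card_fin]
    exact_mod_cast Nat.sub_lt (by omega) one_pos
  have hLself : ∀ j, (L j).eval (b j) = 1 := fun j =>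
    Lagrange.eval_basis_self hbInjOn (mem_univ j)
  have hLne : ∀ j l, j ≠ l → (L j).eval (b l) = 0 := fun j l h =>
    Lagrange.eval_basis_of_ne h (mem_univ l)
  have hrep : ∀ f ∈ degreeLT F K, ∀ x : F,
      f.eval x = ∑ j : Fin K, f.eval (b j) * (L j).eval x := by
    intro f hf x
    have hdeg : f.degree < (#(univ : Finset (Fin K)) : WithBot ℕ) := by
      simpa [card_univ] using Polynomial.mem_degreeLT.mp hf
    conv_lhs => rw [Lagrange.eq_interpolate hbInjOn hdeg]
    rw [Lagrange.interpolate_apply, Polynomial.eval_finset_sum]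
    simp [hL]
  have hvanish : ∀ f ∈ degreeLT F K, (∀ j : Fin K, f.eval (b j) = 0) → f = 0 := by
    intro f hf h0
    by_cases hf0 : f = 0
    · exact hf0
    · refine Polynomial.eq_zero_of_natDegree_lt_card_of_eval_eq_zero f hbinj h0 ?_
      rw [Fintype.card_fin]
      exact (Polynomial.natDegree_lt_iff_degree_lt hf0).mpr (Polynomial.mem_degreeLT.mp hf)
  -- the Gram-type matrix and the choice of lambda
  set T : Finset (Fin N) := univ.filter (fun i => ¬ ((i : ℕ) < K)) with hT
  set B : Matrix (Fin K) (Fin K) F :=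
    Matrix.of fun j l => ∑ i ∈ T, (L j).eval (a i) * (L l).eval (a i) with hBdef
  set P : F[X] :=
    Matrix.det ((X : F[X]) • B.map C + (1 : Matrix (Fin K) (Fin K) F).map C) with hP
  have hPne : P ≠ 0 := by
    intro h
    have h0 : P.coeff 0 = 1 := by
      rw [hP, Polynomial.coeff_det_X_add_C_zero]; simp
    rw [h] at h0; simp at h0
  have hPdeg : P.natDegree ≤ K := by
    have h := Polynomial.natDegree_det_X_add_C_le B (1 : Matrix (Fin K) (Fin K) F)
    rw [Fintype.card_fin] at h
    rw [hP]
    exact h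
  obtain ⟨lam, hlam0, hlamP⟩ := exists_sq_eval_ne P hPne hPdeg hKq
  set μ : F := lam * lam with hμ
  have hmap : ((X : F[X]) • B.map C + (1 : Matrix (Fin K) (Fin K) F).map C).map
      (Polynomial.evalRingHom μ) = μ • B + 1 := by
    ext i j
    rw [Matrix.map_apply]
    by_cases h : i = j
    · subst h
      simp only [Matrix.add_apply, Matrix.smul_apply, Matrix.map_apply, Matrix.one_apply_eq,
        smul_eq_mul, map_add, _root_.map_mul, Polynomial.coe_evalRingHom, eval_mul, eval_add,
        eval_X, eval_C, Polynomial.C_1, eval_one]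
    · simp only [Matrix.add_apply, Matrix.smul_apply, Matrix.map_apply, Matrix.one_apply_ne h,
        smul_eq_mul, Polynomial.C_0, map_zero, Polynomial.coe_evalRingHom, eval_add, eval_mul,
        eval_X, eval_C, eval_zero]
  have hdet : (μ • B + 1 : Matrix (Fin K) (Fin K) F).det ≠ 0 := by
    have h2 : P.eval μ = (μ • B + 1 : Matrix (Fin K) (Fin K) F).det := by
      calc P.eval μ = (Polynomial.evalRingHom μ) P := rfl
        _ = Matrix.det (((X : F[X]) • B.map C +
              (1 : Matrix (Fin K) (Fin K) F).map C).map (Polynomial.evalRingHom μ)) := by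
            rw [hP, RingHom.map_det, RingHom.mapMatrix_apply]
        _ = (μ • B + 1 : Matrix (Fin K) (Fin K) F).det := by rw [hmap]
    rw [← h2]; exact hlamP
  -- the code
  set sc : Fin N → F := fun i => if (i : ℕ) < K then 1 else lam with hsc
  have hsc0 : ∀ i, sc i ≠ 0 := by
    intro i; rw [hsc]; dsimp only; split_ifs
    exacts [one_ne_zero, hlam0]
  set E := evalCodeMap K sc a with hE
  have hEker : ∀ f : degreeLT F K, E f = 0 → f = 0 := by
    intro f hf
    have hz : ∀ j : Fin K, (f : F[X]).eval (b j) = 0 := by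
      intro j
      have h := congrFun hf (Fin.castLE hKle j)
      rw [hE, evalCodeMap_apply] at h
      exact (mul_eq_zero.mp h).resolve_left (hsc0 _)
    exact Subtype.ext (hvanish _ f.2 hz)
  have hEinj : Function.Injective E := by
    intro f g h
    have h1 : E (f - g) = 0 := by rw [map_sub, h, sub_self]
    have h2 := hEker _ h1
    rwa [sub_eq_zero] at h2
  -- weight computation
  have hwt : ∀ (c : Fin N → F) (f : F[X]), (∀ i, c i = sc i * f.eval (a i)) →
      wt c + #(univ.filter fun i : Fin N => f.eval (a i) = 0) = N := by
    intro c f hc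
    have h1 : wt c = #(univ.filter fun i : Fin N => ¬ (f.eval (a i) = 0)) := by
      unfold wt
      congr 1
      refine Finset.filter_congr ?_
      intro i _
      rw [hc i]
      simp [hsc0 i]
    have h2 := Finset.card_filter_add_card_filter_not
      (s := (univ : Finset (Fin N))) (p := fun i : Fin N => f.eval (a i) = 0)
    rw [card_univ, Fintype.card_fin] at h2
    omega
  refine ⟨LinearMap.range E, ?_, ?_, ?_, ?_⟩
  · rw [LinearMap.finrank_range_of_inj hEinj, (Polynomial.degreeLTEquiv F K).finrank_eq]
    simp
  · -- LCD
    rw [IsLCD, eq_bot_iff]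
    intro x hx
    rw [Submodule.mem_bot]
    have hxC := (Submodule.mem_inf.mp hx).1
    have hxD := (Submodule.mem_inf.mp hx).2
    obtain ⟨f, rfl⟩ := LinearMap.mem_range.mp hxC
    set u : Fin K → F := fun j => (f : F[X]).eval (b j) with hu
    have hkey : ∀ l : Fin K, Matrix.vecMul u (μ • B + 1) l = 0 := by
      intro l
      have hc : E ⟨L l, hLmem l⟩ ∈ LinearMap.range E := LinearMap.mem_range_self _ _
      have h0 : ∑ i : Fin N, (E f) i * (E ⟨L l, hLmem l⟩) i = 0 := hxD _ hc
      have hsum : ∑ i : Fin N, (E f) i * (E ⟨L l, hLmem l⟩) i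
          = u l + μ * ∑ j : Fin K, u j * B j l := by
        have hsplit := Finset.sum_filter_add_sum_filter_not (univ : Finset (Fin N))
          (fun i : Fin N => (i : ℕ) < K)
          (fun i => (E f) i * (E ⟨L l, hLmem l⟩) i)
        rw [← hsplit]
        have hpart1 : ∑ i ∈ univ.filter (fun i : Fin N => (i : ℕ) < K),
            (E f) i * (E ⟨L l, hLmem l⟩) i = u l := by
          rw [filter_lt_eq_image hKle, Finset.sum_image
            (fun i _ j _ h => Fin.castLE_injective hKle h)]
          have : ∀ j : Fin K, (E f) (Fin.castLE hKle j) * (E ⟨L l, hLmem l⟩) (Fin.castLE hKle j)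
              = (f : F[X]).eval (b j) * (L l).eval (b j) := by
            intro j
            rw [hE, evalCodeMap_apply, evalCodeMap_apply, hsc]
            simp only [Fin.coe_castLE, j.isLt, if_pos]
            simp [hb]
          rw [Finset.sum_congr rfl fun j _ => this j]
          rw [Finset.sum_eq_single l]
          · rw [hLself l, mul_one, hu]
          · intro j _ hj
            rw [hLne l j ?_, mul_zero]
            exact fun h => hj h.symm
          · intro h; exact absurd (mem_univ l) h
        have hpart2 : ∑ i ∈ univ.filter (fun i : Fin N => ¬ ((i : ℕ) < K)),
            (E f) i * (E ⟨L l, hLmem l⟩) i = μ * ∑ j : Fin K, u j * B j l := by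
          have hterm : ∀ i ∈ T, (E f) i * (E ⟨L l, hLmem l⟩) i
              = μ * ((f : F[X]).eval (a i) * (L l).eval (a i)) := by
            intro i hi
            have hiK : ¬ ((i : ℕ) < K) := (Finset.mem_filter.mp hi).2
            rw [hE, evalCodeMap_apply, evalCodeMap_apply, hsc]
            simp only [hiK, if_false]
            rw [hμ]
            ring
          rw [← hT, Finset.sum_congr rfl hterm, ← Finset.mul_sum]
          congr 1
          have hexp : ∀ i ∈ T, (f : F[X]).eval (a i) * (L l).eval (a i)
              = ∑ j : Fin K, u j * ((L j).eval (a i) * (L l).eval (a i)) := by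
            intro i _
            rw [hrep (f : F[X]) f.2 (a i), Finset.sum_mul]
            exact Finset.sum_congr rfl fun j _ => by rw [hu]; ring
          rw [Finset.sum_congr rfl hexp, Finset.sum_comm]
          refine Finset.sum_congr rfl fun j _ => ?_
          rw [← Finset.mul_sum, hBdef]
          rfl
        rw [hpart1, hpart2]
      have hv : Matrix.vecMul u (μ • B + 1) l = μ * (∑ j : Fin K, u j * B j l) + u l := by
        simp only [Matrix.vecMul, dotProduct, Matrix.add_apply, Matrix.smul_apply,
          Matrix.one_apply, smul_eq_mul, mul_add, Finset.sum_add_distrib, mul_ite, mul_one,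
          mul_zero]
        rw [Finset.sum_ite_eq' univ l u]
        simp only [mem_univ, if_pos]
        congr 1
        rw [Finset.mul_sum]
        exact Finset.sum_congr rfl fun j _ => by ring
      rw [hv]
      rw [hsum] at h0
      linear_combination h0
    have hu0 : u = 0 := by
      have hMT : IsUnit ((μ • B + 1 : Matrix (Fin K) (Fin K) F)ᵀ) := by
        rw [Matrix.isUnit_iff_isUnit_det, Matrix.det_transpose]
        exact isUnit_iff_ne_zero.mpr hdet
      have hinj := Matrix.mulVec_injective_iff_isUnit.mpr hMT
      apply hinj
      rw [Matrix.mulVec_transpose, Matrix.mulVec_zero]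
      funext l
      exact hkey l
    have hf0 : f = 0 := by
      refine Subtype.ext (hvanish _ f.2 ?_)
      intro j
      have := congrFun hu0 j
      rwa [hu] at this
    rw [hf0, map_zero]
  · -- existence of min weight word
    set j0 : Fin K := ⟨0, hK⟩ with hj0
    set f0 : F[X] := ∏ j ∈ univ.erase j0, (X - C (b j)) with hf0def
    have hf0ne : f0 ≠ 0 := by
      rw [hf0def]
      exact (monic_prod_of_monic _ _ fun j _ => monic_X_sub_C (b j)).ne_zero
    have hf0deg : f0.natDegree = K - 1 := by
      rw [hf0def, Polynomial.natDegree_prod _ _ fun j _ => X_sub_C_ne_zero (b j)]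
      simp [Polynomial.natDegree_X_sub_C, Finset.card_erase_of_mem]
    have hf0mem : f0 ∈ degreeLT F K := by
      rw [Polynomial.mem_degreeLT]
      refine lt_of_le_of_lt Polynomial.degree_le_natDegree ?_
      rw [hf0deg]
      exact_mod_cast Nat.sub_lt (by omega) one_pos
    have heval0 : ∀ x : F, f0.eval x = ∏ j ∈ univ.erase j0, (x - b j) := by
      intro x; rw [hf0def]; simp [Polynomial.eval_prod]
    have hzero : univ.filter (fun i : Fin N => f0.eval (a i) = 0)
        = (univ.erase j0).image (Fin.castLE hKle) := by
      ext i
      simp only [Finset.mem_filter, Finset.mem_univ, true_and, Finset.mem_image,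
        Finset.mem_erase]
      rw [heval0, Finset.prod_eq_zero_iff]
      constructor
      · rintro ⟨j, hj, hij⟩
        have hab : a i = b j := by
          have := sub_eq_zero.mp hij; exact this
        refine ⟨j, ⟨(Finset.mem_erase.mp hj).1, trivial⟩, ?_⟩
        exact a.injective hab.symm
      · rintro ⟨j, hj, rfl⟩
        refine ⟨j, Finset.mem_erase.mpr ⟨hj.1, mem_univ j⟩, ?_⟩
        rw [hb]
        simp
    set c0 : Fin N → F := E ⟨f0, hf0mem⟩ with hc0
    have hc0ne : c0 ≠ 0 := by
      intro h
      have h1 : f0.eval (b j0) ≠ 0 := by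
        rw [heval0]
        rw [Finset.prod_ne_zero_iff]
        intro j hj
        rw [sub_ne_zero]
        intro he
        exact (Finset.mem_erase.mp hj).1 (hbinj he).symm
      have h2 := congrFun h (Fin.castLE hKle j0)
      rw [hc0, hE, evalCodeMap_apply] at h2
      have : (f0 : F[X]).eval (a (Fin.castLE hKle j0)) = 0 :=
        (mul_eq_zero.mp h2).resolve_left (hsc0 _)
      exact h1 this
    refine ⟨c0, LinearMap.mem_range_self _ _, hc0ne, ?_⟩
    have hwc := hwt c0 f0 (fun i => rfl)
    rw [hzero, Finset.card_image_of_injective _ (Fin.castLE_injective hKle),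
      Finset.card_erase_of_mem (mem_univ j0), card_univ, Fintype.card_fin] at hwc
    omega
  · -- lower bound
    intro c hc hc0
    obtain ⟨f, rfl⟩ := LinearMap.mem_range.mp hc
    have hfne : (f : F[X]) ≠ 0 := by
      intro h
      apply hc0
      funext i
      rw [hE, evalCodeMap_apply, h]
      simp
    have hnd : (f : F[X]).natDegree < K :=
      (Polynomial.natDegree_lt_iff_degree_lt hfne).mpr (Polynomial.mem_degreeLT.mp f.2)
    have hcard : #(univ.filter fun i : Fin N => (f : F[X]).eval (a i) = 0) ≤ K - 1 := by
      calc #(univ.filter fun i : Fin N => (f : F[X]).eval (a i) = 0)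
          ≤ (f : F[X]).roots.toFinset.card := by
            refine Finset.card_le_card_of_injOn (fun i => a i) ?_ ?_
            · intro i hi
              rw [Finset.mem_coe, Multiset.mem_toFinset, Polynomial.mem_roots']
              exact ⟨hfne, (Finset.mem_filter.mp hi).2⟩
            · intro i _ j _ h
              exact a.injective h
        _ ≤ Multiset.card (f : F[X]).roots := Multiset.toFinset_card_le _
        _ ≤ (f : F[X]).natDegree := Polynomial.card_roots' _
        _ ≤ K - 1 := by omega
    have hwc := hwt (E f) (f : F[X]) (fun i => rfl)
    omega

theorem exists_mds_lcd_of_dvd {F : Type*} [Field F] [Fintype F] {p m n k : ℕ}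
    (hp : p.Prime) (hm : 1 < m)
    (hq : Fintype.card F = p ^ m)
    (hn : n ∣ (Fintype.card F - 1))
    (hk : k ≤ (n - 1) / 2) :
    ∀ k', 1 ≤ k' → k' ≤ k →
      ∃ C : Submodule F (Fin (n - k) → F),
        Module.finrank F C = k' ∧ IsLCD C ∧ hasMinDist C ((n - k) - k' + 1) := by
  intro k' hk'1 hk'k
  have hq4 : 4 ≤ Fintype.card F := by
    rw [hq]
    calc (4 : ℕ) = 2 ^ 2 := by norm_num
      _ ≤ 2 ^ m := Nat.pow_le_pow_right (by norm_num) hm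
      _ ≤ p ^ m := Nat.pow_le_pow_left hp.two_le m
  have hnle : n ≤ Fintype.card F - 1 := Nat.le_of_dvd (by omega) hn
  have h2k : 2 * k ≤ n - 1 := by
    have := (Nat.le_div_iff_mul_le (by norm_num : 0 < 2)).mp hk
    omega
  have hk1 : 1 ≤ k := le_trans hk'1 hk'k
  have hn3 : 3 ≤ n := by omega
  exact aux_code hk'1 (by omega) (by omega) (by omega)
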